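/- arXiv:2008.03049 — 5 statements merged into one kernel-verified Lean document; each statement's English description precedes it below -/
import Mathlib

section
/- Let 0 → A →f B →g C → 0 be a short exact sequence of finitely generated abelian groups (f injective, g surjective, ker g = im f). Then the sequence splits — i.e., g admits a group-homomorphism section s : C → B with g ∘ s = id_C (equivalently, f admits a retraction) — if and only if B is isomorphic to A ⊕ C as an abelian group. -/
open Function

/-- The `n`-torsion subgroup. -/
def torsAG (n : ℕ) (M : Type*) [AddCommGroup M] : AddSubgroup M where
  carrier := {x | n • x = 0}
  zero_mem' := by simp
  add_mem' := by
    intro a b ha hb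
    simp only [Set.mem_setOf_eq, smul_add] at *
    rw [ha, hb, add_zero]
  neg_mem' := by
    intro a ha
    simp only [Set.mem_setOf_eq, smul_neg] at *
    rw [ha, neg_zero]

lemma mem_torsAG {n : ℕ} {M : Type*} [AddCommGroup M] {x : M} :
    x ∈ torsAG n M ↔ n • x = 0 := Iff.rfl

lemma torsAG_finite (n : ℕ) (hn : n ≠ 0) (M : Type) [AddCommGroup M] [AddGroup.FG M] :
    Finite (torsAG n M) := by
  have h1 : Module.Finite ℤ M := Module.Finite.iff_addGroup_fg.mpr ‹_›
  have h2 : Module.Finite ℤ (AddSubgroup.toIntSubmodule (torsAG n M)) :=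
    Module.Finite.iff_fg.mpr (IsNoetherian.noetherian _)
  have h3 : AddGroup.FG (torsAG n M) := Module.Finite.iff_addGroup_fg.mp h2
  refine AddCommGroup.finite_of_fg_torsion _ (fun x => ?_)
  refine isOfFinAddOrder_iff_nsmul_eq_zero.mpr ⟨n, Nat.pos_of_ne_zero hn, ?_⟩
  ext
  exact x.2

lemma key_lift {A B C : Type} [AddCommGroup A] [AddCommGroup B] [AddCommGroup C]
    [AddGroup.FG A] [AddGroup.FG B] [AddGroup.FG C]
    (f : A →+ B) (g : B →+ C) (hf : Function.Injective f)
    (hg : Function.Surjective g)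
    (hexact : ∀ b : B, g b = 0 ↔ b ∈ Set.range f)
    (e : B ≃+ A × C) (n : ℕ) (c : C) (hc : n • c = 0) :
    ∃ b : B, g b = c ∧ n • b = 0 := by
  rcases eq_or_ne n 0 with rfl | hn
  · obtain ⟨b, rfl⟩ := hg c
    exact ⟨b, rfl, zero_smul _ _⟩
  have finA := torsAG_finite n hn A
  have finB := torsAG_finite n hn B
  have finC := torsAG_finite n hn C
  -- the map B[n] → C[n]
  have hφmem : ∀ x : torsAG n B, g x ∈ torsAG n C := by
    intro x
    have : n • (x : B) = 0 := x.2
    rw [mem_torsAG, ← map_nsmul, this, map_zero]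
  let φ : torsAG n B →+ torsAG n C :=
    AddMonoidHom.codRestrict (g.comp (torsAG n B).subtype) _ hφmem
  have hφ : ∀ x : torsAG n B, (φ x : C) = g x := fun _ => rfl
  -- B[n] ≃ A[n] × C[n]
  have eB : torsAG n B ≃ (torsAG n A) × (torsAG n C) := by
    refine ⟨fun x => ⟨⟨(e x).1, ?_⟩, ⟨(e x).2, ?_⟩⟩,
      fun y => ⟨e.symm (y.1, y.2), ?_⟩, fun x => ?_, fun y => ?_⟩
    · have : n • e (x : B) = 0 := by rw [← map_nsmul, x.2, map_zero]
      rw [mem_torsAG, ← Prod.smul_fst, this]; rfl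
    · have : n • e (x : B) = 0 := by rw [← map_nsmul, x.2, map_zero]
      rw [mem_torsAG, ← Prod.smul_snd, this]; rfl
    · have hy : n • ((y.1 : A), (y.2 : C)) = 0 := by
        rw [Prod.smul_mk, y.1.2, y.2.2]; rfl
      rw [mem_torsAG, ← map_nsmul, hy, map_zero]
    · ext : 1
      simp
    · ext : 1 <;> simp
  -- ker φ ≃ A[n]
  have eK : torsAG n A ≃ φ.ker := by
    refine Equiv.ofBijective (fun a => ⟨⟨f a, ?_⟩, ?_⟩) ⟨?_, ?_⟩
    · rw [mem_torsAG, ← map_nsmul, a.2, map_zero]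
    · have : g (f (a : A)) = 0 := (hexact _).mpr ⟨a, rfl⟩
      exact Subtype.ext this
    · intro a a' h
      simp only [Subtype.mk.injEq] at h
      exact Subtype.ext (hf (congrArg (fun z : φ.ker => ((z : torsAG n B) : B)) h))
    · rintro ⟨⟨b, hb⟩, hbk⟩
      have : g b = 0 := congrArg Subtype.val hbk
      obtain ⟨a, rfl⟩ := (hexact b).mp this
      have ha : a ∈ torsAG n A := by
        rw [mem_torsAG]
        apply hf
        rw [map_nsmul, map_zero]
        exact hb
      exact ⟨⟨a, ha⟩, rfl⟩
  -- cardinalities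
  have hcard1 : Nat.card (torsAG n B) = Nat.card (torsAG n A) * Nat.card (torsAG n C) := by
    rw [Nat.card_congr eB, Nat.card_prod]
  have hcard2 : Nat.card (torsAG n B) = Nat.card φ.range * Nat.card φ.ker := by
    rw [AddSubgroup.card_eq_card_quotient_mul_card_addSubgroup φ.ker,
      Nat.card_congr (QuotientAddGroup.quotientKerEquivRange φ).toEquiv]
  have hk : Nat.card φ.ker = Nat.card (torsAG n A) := (Nat.card_congr eK).symm
  have hApos : Nat.card (torsAG n A) ≠ 0 := Nat.card_pos.ne'
  have hr : Nat.card φ.range = Nat.card (torsAG n C) := by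
    have h3 : Nat.card (torsAG n A) * Nat.card φ.range
        = Nat.card (torsAG n A) * Nat.card (torsAG n C) := by
      rw [← hcard1, hcard2, hk, mul_comm]
    exact Nat.eq_of_mul_eq_mul_left (Nat.pos_of_ne_zero hApos) h3
  have htop : φ.range = ⊤ := AddSubgroup.eq_top_of_card_eq _ hr
  have hsurj : Function.Surjective φ := by
    rwa [← AddMonoidHom.range_eq_top]
  obtain ⟨x, hx⟩ := hsurj ⟨c, hc⟩
  exact ⟨x, congrArg Subtype.val hx, x.2⟩

open scoped DirectSum

lemma build_section {B C : Type} [AddCommGroup B] [AddCommGroup C] [AddGroup.FG C]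
    (g : B →+ C) (hg : Function.Surjective g)
    (hlift : ∀ (n : ℕ) (c : C), n • c = 0 → ∃ b, g b = c ∧ n • b = 0) :
    ∃ s : C →+ B, g.comp s = AddMonoidHom.id C := by
  classical
  obtain ⟨k, ι, hι, p, hp, ex, ⟨ψ⟩⟩ := AddCommGroup.equiv_free_prod_directSum_zmod C
  set P := (Fin k →₀ ℤ) × ⨁ i : ι, ZMod (p i ^ ex i) with hP
  -- free part
  choose b₁ hb₁ using fun j : Fin k => hg (ψ.symm (Finsupp.single j 1, 0))
  let t₁ : (Fin k →₀ ℤ) →+ B := Finsupp.liftAddHom (fun j => zmultiplesHom B (b₁ j))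
  have ht₁ : ∀ x : Fin k →₀ ℤ, g (t₁ x) = ψ.symm (x, 0) := by
    have : g.comp t₁ =
        (ψ.symm : P →+ C).comp (AddMonoidHom.inl (Fin k →₀ ℤ) (⨁ i : ι, ZMod (p i ^ ex i))) := by
      ext j
      simp only [AddMonoidHom.comp_apply, AddMonoidHom.inl_apply, AddMonoidHom.coe_coe,
        Finsupp.singleAddHom_apply]
      rw [show t₁ (Finsupp.single j 1) = (1 : ℤ) • b₁ j by
        simp [t₁], one_zsmul, hb₁ j]
      rfl
    intro x
    exact DFunLike.congr_fun this x
  -- torsion part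
  have hc₂ : ∀ i : ι, (p i ^ ex i) • (ψ.symm (0, DirectSum.of (fun i => ZMod (p i ^ ex i)) i 1) : C) = 0 := by
    intro i
    rw [← map_nsmul, Prod.smul_mk, smul_zero, ← map_nsmul]
    have : (p i ^ ex i) • (1 : ZMod (p i ^ ex i)) = 0 := by
      simp [nsmul_eq_mul]
    rw [this]
    simp
  choose b₂ hb₂ hb₂' using fun i : ι =>
    hlift (p i ^ ex i) (ψ.symm (0, DirectSum.of (fun i => ZMod (p i ^ ex i)) i 1)) (hc₂ i)
  let comp : ∀ i : ι, ZMod (p i ^ ex i) →+ B := fun i =>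
    ZMod.lift (p i ^ ex i) ⟨zmultiplesHom B (b₂ i), by
      simp only [zmultiplesHom_apply, natCast_zsmul]
      exact hb₂' i⟩
  let t₂ : (⨁ i : ι, ZMod (p i ^ ex i)) →+ B := DirectSum.toAddMonoid comp
  have ht₂ : ∀ y : ⨁ i : ι, ZMod (p i ^ ex i), g (t₂ y) = ψ.symm (0, y) := by
    have : g.comp t₂ =
        (ψ.symm : P →+ C).comp (AddMonoidHom.inr (Fin k →₀ ℤ) (⨁ i : ι, ZMod (p i ^ ex i))) := by
      refine DirectSum.addHom_ext fun i x => ?_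
      obtain ⟨y, rfl⟩ := ZMod.intCast_surjective x
      simp only [AddMonoidHom.comp_apply, AddMonoidHom.inr_apply]
      have h1 : t₂ (DirectSum.of (fun i => ZMod (p i ^ ex i)) i ((y : ℤ) : ZMod (p i ^ ex i)))
          = y • b₂ i := by
        simp [t₂, comp, DirectSum.toAddMonoid_of]
      have h2 : (y : ℤ) • ((0 : Fin k →₀ ℤ), DirectSum.of (fun i => ZMod (p i ^ ex i)) i 1)
          = ((0 : Fin k →₀ ℤ),
            DirectSum.of (fun i => ZMod (p i ^ ex i)) i ((y : ℤ) : ZMod (p i ^ ex i))) := by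
        rw [Prod.smul_mk, smul_zero, ← map_zsmul, zsmul_eq_mul, mul_one]
      rw [h1, map_zsmul, hb₂, ← map_zsmul, h2]
      rfl
    intro y
    exact DFunLike.congr_fun this y
  refine ⟨(t₁.comp (AddMonoidHom.fst _ _) + t₂.comp (AddMonoidHom.snd _ _)).comp
    (ψ : C →+ P), ?_⟩
  ext c
  have hsum : ((ψ c).1, (0 : ⨁ i : ι, ZMod (p i ^ ex i))) + (0, (ψ c).2) = ψ c := by
    ext <;> simp
  show g (t₁ (ψ c).1 + t₂ (ψ c).2) = c
  rw [map_add, ht₁, ht₂, ← map_add, hsum, ψ.symm_apply_apply]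


lemma split_iso {A B C : Type} [AddCommGroup A] [AddCommGroup B] [AddCommGroup C]
    (f : A →+ B) (g : B →+ C) (hf : Function.Injective f)
    (hexact : ∀ b : B, g b = 0 ↔ b ∈ Set.range f)
    (s : C →+ B) (hs : g.comp s = AddMonoidHom.id C) :
    Nonempty (B ≃+ A × C) := by
  have hgs : ∀ c, g (s c) = c := fun c => DFunLike.congr_fun hs c
  have hmem : ∀ b : B, b - s (g b) ∈ Set.range f := by
    intro b
    rw [← hexact, map_sub, hgs, sub_self]
  choose ρ hρ using hmem
  have hρ' : ∀ b, f (ρ b) = b - s (g b) := hρ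
  have hgf : ∀ a, g (f a) = 0 := fun a => (hexact (f a)).mpr ⟨a, rfl⟩
  refine ⟨AddEquiv.mk ⟨fun b => (ρ b, g b), fun x => f x.1 + s x.2, ?_, ?_⟩ ?_⟩
  · intro b
    simp only
    rw [hρ', sub_add_cancel]
  · rintro ⟨a, c⟩
    simp only [map_add, hgf, hgs, zero_add, Prod.mk.injEq]
    refine ⟨hf ?_, trivial⟩
    rw [hρ', map_add, hgf, zero_add, hgs, add_sub_cancel_right]
  · intro b b'
    simp only [Prod.mk_add_mk, Prod.mk.injEq, map_add]
    refine ⟨hf ?_, trivial⟩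
    rw [hρ', map_add g, map_add f, hρ', hρ', map_add s]
    abel

/-- A short exact sequence `0 → A → B → C → 0` of finitely generated abelian groups
splits (i.e. `g` admits a group-homomorphism section) if and only if
`B` is isomorphic to `A ⊕ C` as an abelian group. -/
theorem stmt0 (A B C : Type) [AddCommGroup A] [AddCommGroup B] [AddCommGroup C]
    [AddGroup.FG A] [AddGroup.FG B] [AddGroup.FG C]
    (f : A →+ B) (g : B →+ C)
    (hf : Function.Injective f) (hg : Function.Surjective g)
    (hexact : ∀ b : B, g b = 0 ↔ b ∈ Set.range f) :
    (∃ s : C →+ B, g.comp s = AddMonoidHom.id C) ↔ Nonempty (B ≃+ A × C) := by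
  constructor
  · rintro ⟨s, hs⟩
    exact split_iso f g hf hexact s hs
  · rintro ⟨e⟩
    exact build_section g hg (key_lift f g hf hg hexact e)
end

section
/- Let A, B, C be finite abelian groups (equivalently, ℤ-modules of finite length) and let 0 → A →f B →g C → 0 be a short exact sequence. If B is isomorphic to A ⊕ C as an abelian group, then the sequence splits, i.e., g admits a group-homomorphism section s : C → B with g ∘ s = id_C. -/
/-- For a short exact sequence `0 → A → B → C → 0` of finite abelian groups,
if `B ≅ A ⊕ C` as abelian groups then the sequence splits: `g` admits a
group-homomorphism section. -/
theorem stmt1 (A B C : Type) [AddCommGroup A] [AddCommGroup B] [AddCommGroup C]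
    [Finite A] [Finite B] [Finite C]
    (f : A →+ B) (g : B →+ C)
    (hf : Function.Injective f) (hg : Function.Surjective g)
    (hexact : ∀ b : B, g b = 0 ↔ b ∈ Set.range f)
    (hiso : Nonempty (B ≃+ A × C)) :
    ∃ s : C →+ B, g.comp s = AddMonoidHom.id C := by
  classical
  obtain ⟨e⟩ := hiso
  haveI : Finite (C →+ B) := Finite.of_injective _ (DFunLike.coe_injective (F := C →+ B))
  haveI : Finite (C →+ A) := Finite.of_injective _ (DFunLike.coe_injective (F := C →+ A))
  haveI : Finite (C →+ C) := Finite.of_injective _ (DFunLike.coe_injective (F := C →+ C))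
  -- a partial inverse to `f`
  set ρ : B → A := Function.invFun f with hρ
  have key : ∀ b : B, g b = 0 → f (ρ b) = b := fun b hb =>
    Function.invFun_eq ((hexact b).1 hb)
  -- the postcomposition-with-g homomorphism
  set Φ : (C →+ B) →+ (C →+ C) :=
    { toFun := fun φ => g.comp φ
      map_zero' := by ext c; simp
      map_add' := by intro φ ψ; ext c; simp } with hΦ
  -- card of Hom(C,B) = card Hom(C,A) * card Hom(C,C)
  have hcard1 : Nat.card (C →+ B) = Nat.card (C →+ A) * Nat.card (C →+ C) := by
    have e1 : (C →+ B) ≃ (C →+ A × C) :=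
      AddEquiv.addMonoidHomCongrRightEquiv e
    have e2 : (C →+ A × C) ≃ (C →+ A) × (C →+ C) :=
      { toFun := fun φ => ⟨(AddMonoidHom.fst A C).comp φ, (AddMonoidHom.snd A C).comp φ⟩
        invFun := fun p => p.1.prod p.2
        left_inv := by intro φ; ext c <;> simp
        right_inv := by intro p; constructor <;> ext c <;> simp }
    rw [Nat.card_congr (e1.trans e2), Nat.card_prod]
  -- membership in ker Φ unfolds to pointwise vanishing
  have hmem : ∀ ψ : C →+ B, ψ ∈ Φ.ker → ∀ c : C, g (ψ c) = 0 := by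
    intro ψ hψ c
    have := DFunLike.congr_fun (AddMonoidHom.mem_ker.1 hψ) c
    simpa [hΦ] using this
  -- card of ker Φ = card Hom(C,A)
  have hker : Nat.card Φ.ker = Nat.card (C →+ A) := by
    have eker : (C →+ A) ≃ Φ.ker :=
      { toFun := fun φ => ⟨f.comp φ, by
          rw [AddMonoidHom.mem_ker]
          ext c
          simp only [hΦ, AddMonoidHom.coe_mk, ZeroHom.coe_mk, AddMonoidHom.comp_apply,
            AddMonoidHom.zero_apply]
          exact (hexact (f (φ c))).2 ⟨φ c, rfl⟩⟩
        invFun := fun ψ =>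
          { toFun := fun c => ρ ((ψ : C →+ B) c)
            map_zero' := by
              apply hf
              rw [key _ (by simp)]
              simp
            map_add' := by
              intro x y
              apply hf
              rw [f.map_add, key _ (hmem _ ψ.2 _), key _ (hmem _ ψ.2 _),
                key _ (hmem _ ψ.2 _), map_add] }
        left_inv := by
          intro φ
          ext c
          apply hf
          exact key _ ((hexact _).2 ⟨φ c, rfl⟩)
        right_inv := by
          intro ψ
          apply Subtype.ext
          ext c
          exact key _ (hmem _ ψ.2 c) }
    exact (Nat.card_congr eker).symm
  -- Lagrange + first isomorphism theorem: card of range Φ = card Hom(C,C)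
  have hlag : Nat.card (C →+ B) = Nat.card ((C →+ B) ⧸ Φ.ker) * Nat.card Φ.ker :=
    AddSubgroup.card_eq_card_quotient_mul_card_addSubgroup _
  have hq : Nat.card ((C →+ B) ⧸ Φ.ker) = Nat.card Φ.range :=
    Nat.card_congr (QuotientAddGroup.quotientKerEquivRange Φ).toEquiv
  have hA0 : Nat.card (C →+ A) ≠ 0 := Nat.card_ne_zero.2 ⟨⟨0⟩, inferInstance⟩
  have hrange : Nat.card Φ.range = Nat.card (C →+ C) := by
    rw [hq, hker] at hlag
    rw [hcard1, mul_comm (Nat.card (C →+ A))] at hlag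
    exact (Nat.eq_of_mul_eq_mul_right (Nat.pos_of_ne_zero hA0) hlag.symm)
  -- hence Φ is surjective, so `id` has a preimage, a section of `g`
  have htop : Φ.range = ⊤ := AddSubgroup.eq_top_of_card_eq _ hrange
  have hid : AddMonoidHom.id C ∈ Φ.range := htop ▸ AddSubgroup.mem_top _
  obtain ⟨s, hs⟩ := hid
  exact ⟨s, hs⟩
end

section
/- The operation ∘ on G(t,r) is associative with two-sided identity (1,0,0), so G(t,r) is a monoid. An element (x,y,z) ∈ G(t,r) is invertible with respect to ∘ if and only if x is a unit of ℤ/2^{t+1} (equivalently, x is the class of an odd integer). Consequently, the group E(t,r) of invertible elements of G(t,r) has order 2^{t+2r+1} = 2^{t+r+min(r,t)+1}. -/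
/-- The composition law of `[C,C]` for the elementary Chang complex `C = C^{n+2,t}_r`
with `t ≥ r`, in coordinates `ℤ/2^{t+1} × ℤ/2^{r+1} × ℤ/2^r`:
`(x,y,z)∘(x',y',z') = (x·x', π(x)·y' + π(x')·y + y·μ(z'), π(x)·z' + π(x')·z + 2·z·z')`,
where `π` denotes the canonical projections and `μ` the doubling map
`ℤ/2^r → ℤ/2^{r+1}`. -/
def changOp (t r : ℕ) (htr : r ≤ t)
    (a b : ZMod (2 ^ (t + 1)) × ZMod (2 ^ (r + 1)) × ZMod (2 ^ r)) :
    ZMod (2 ^ (t + 1)) × ZMod (2 ^ (r + 1)) × ZMod (2 ^ r) :=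
  (a.1 * b.1,
   ZMod.castHom (pow_dvd_pow 2 (by omega : r + 1 ≤ t + 1)) (ZMod (2 ^ (r + 1))) a.1 * b.2.1
     + ZMod.castHom (pow_dvd_pow 2 (by omega : r + 1 ≤ t + 1)) (ZMod (2 ^ (r + 1))) b.1 * a.2.1
     + a.2.1 * (2 * (ZMod.cast b.2.2 : ZMod (2 ^ (r + 1)))),
   ZMod.castHom (pow_dvd_pow 2 (by omega : r ≤ t + 1)) (ZMod (2 ^ r)) a.1 * b.2.2
     + ZMod.castHom (pow_dvd_pow 2 (by omega : r ≤ t + 1)) (ZMod (2 ^ r)) b.1 * a.2.2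
     + 2 * a.2.2 * b.2.2)

section ChangHelpers

lemma chang_key (r n : ℕ) :
    (2 : ZMod (2 ^ (r + 1))) * (ZMod.cast ((n : ZMod (2 ^ r))) : ZMod (2 ^ (r + 1)))
      = ((2 * n : ℕ) : ZMod (2 ^ (r + 1))) := by
  haveI : NeZero (2 ^ r : ℕ) := ⟨pow_ne_zero r two_ne_zero⟩
  have h1 : (ZMod.cast ((n : ZMod (2 ^ r))) : ZMod (2 ^ (r + 1)))
      = ((n % 2 ^ r : ℕ) : ZMod (2 ^ (r + 1))) := by
    rw [← ZMod.natCast_val, ZMod.val_natCast]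
  have hm : 2 * (n % 2 ^ r) ≡ 2 * n [MOD 2 ^ (r + 1)] := by
    have := (Nat.mod_modEq n (2 ^ r)).mul_left' 2
    rwa [show 2 * 2 ^ r = 2 ^ (r + 1) by ring] at this
  rw [h1]
  calc (2 : ZMod (2 ^ (r + 1))) * ((n % 2 ^ r : ℕ) : ZMod (2 ^ (r + 1)))
      = ((2 * (n % 2 ^ r) : ℕ) : ZMod (2 ^ (r + 1))) := by push_cast; ring
    _ = ((2 * n : ℕ) : ZMod (2 ^ (r + 1))) := (ZMod.natCast_eq_natCast_iff _ _ _).mpr hm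

lemma chang_mu_add (r : ℕ) (w w' : ZMod (2 ^ r)) :
    (2 : ZMod (2 ^ (r + 1))) * (ZMod.cast (w + w') : ZMod (2 ^ (r + 1)))
      = 2 * (ZMod.cast w : ZMod (2 ^ (r + 1))) + 2 * (ZMod.cast w' : ZMod (2 ^ (r + 1))) := by
  haveI : NeZero (2 ^ r : ℕ) := ⟨pow_ne_zero r two_ne_zero⟩
  obtain ⟨n, rfl⟩ := ZMod.natCast_zmod_surjective w
  obtain ⟨n', rfl⟩ := ZMod.natCast_zmod_surjective w'
  rw [← Nat.cast_add, chang_key, chang_key, chang_key]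
  push_cast; ring

lemma chang_mu_smul (t r : ℕ) (htr : r ≤ t) (x : ZMod (2 ^ (t + 1))) (w : ZMod (2 ^ r)) :
    (2 : ZMod (2 ^ (r + 1))) *
      (ZMod.cast (ZMod.castHom (pow_dvd_pow 2 (by omega : r ≤ t + 1)) (ZMod (2 ^ r)) x * w) :
        ZMod (2 ^ (r + 1)))
      = ZMod.castHom (pow_dvd_pow 2 (by omega : r + 1 ≤ t + 1)) (ZMod (2 ^ (r + 1))) x *
          (2 * (ZMod.cast w : ZMod (2 ^ (r + 1)))) := by
  haveI : NeZero (2 ^ r : ℕ) := ⟨pow_ne_zero r two_ne_zero⟩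
  haveI : NeZero (2 ^ (t + 1) : ℕ) := ⟨pow_ne_zero _ two_ne_zero⟩
  obtain ⟨n, rfl⟩ := ZMod.natCast_zmod_surjective w
  obtain ⟨m, rfl⟩ := ZMod.natCast_zmod_surjective x
  rw [map_natCast, map_natCast, ← Nat.cast_mul, chang_key, chang_key]
  push_cast; ring

lemma chang_mu_dbl (r : ℕ) (w w' : ZMod (2 ^ r)) :
    (2 : ZMod (2 ^ (r + 1))) * (ZMod.cast (2 * w * w') : ZMod (2 ^ (r + 1)))
      = (2 * (ZMod.cast w : ZMod (2 ^ (r + 1)))) * (2 * (ZMod.cast w' : ZMod (2 ^ (r + 1)))) := by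
  haveI : NeZero (2 ^ r : ℕ) := ⟨pow_ne_zero r two_ne_zero⟩
  obtain ⟨n, rfl⟩ := ZMod.natCast_zmod_surjective w
  obtain ⟨n', rfl⟩ := ZMod.natCast_zmod_surjective w'
  rw [show ((2 : ZMod (2 ^ r)) * n * n') = ((2 * n * n' : ℕ) : ZMod (2 ^ r)) by push_cast; ring,
    chang_key, chang_key, chang_key]
  push_cast; ring

lemma chang_isUnit_iff_odd (k : ℕ) (hk : 1 ≤ k) (x : ZMod (2 ^ k)) :
    IsUnit x ↔ Odd x.val := by
  haveI : NeZero (2 ^ k : ℕ) := ⟨pow_ne_zero _ two_ne_zero⟩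
  have hx : ((x.val : ℕ) : ZMod (2 ^ k)) = x := ZMod.natCast_rightInverse x
  have h := ZMod.isUnit_iff_coprime x.val (2 ^ k)
  rw [hx] at h
  rw [h, Nat.coprime_pow_right_iff hk, Nat.coprime_two_right]

lemma chang_unit_add_even (k : ℕ) (hk : 1 ≤ k) (u v : ZMod (2 ^ k)) (hu : IsUnit u) :
    IsUnit (u + 2 * v) := by
  haveI : NeZero (2 ^ k : ℕ) := ⟨pow_ne_zero _ two_ne_zero⟩
  rw [chang_isUnit_iff_odd k hk] at hu ⊢
  rw [Nat.odd_iff] at hu ⊢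
  have hd : (2 : ℕ) ∣ 2 ^ k := dvd_pow_self 2 (by omega)
  have h2 : (2 : ZMod (2 ^ k)) * v = v + v := by ring
  have hb : (v + v).val % 2 = 0 := by
    rw [ZMod.val_add, Nat.mod_mod_of_dvd _ hd]; omega
  rw [h2, ZMod.val_add, Nat.mod_mod_of_dvd _ hd]
  omega

end ChangHelpers




/-- For `t ≥ r ≥ 1`, the operation `∘` on `G(t,r) = ℤ/2^{t+1} × ℤ/2^{r+1} × ℤ/2^r` is
associative with two-sided identity `(1,0,0)`; an element `(x,y,z)` is invertible iff
`x` is a unit of `ℤ/2^{t+1}` (equivalently, the class of an odd integer); and the group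
`E(t,r)` of invertible elements has order `2^{t+2r+1} = 2^{t+r+min(r,t)+1}`. -/
theorem stmt3 (t r : ℕ) (hr : 1 ≤ r) (htr : r ≤ t) :
    (∀ a b c : ZMod (2 ^ (t + 1)) × ZMod (2 ^ (r + 1)) × ZMod (2 ^ r),
      changOp t r htr (changOp t r htr a b) c = changOp t r htr a (changOp t r htr b c)) ∧
    (∀ a : ZMod (2 ^ (t + 1)) × ZMod (2 ^ (r + 1)) × ZMod (2 ^ r),
      changOp t r htr (1, 0, 0) a = a ∧ changOp t r htr a (1, 0, 0) = a) ∧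
    (∀ a : ZMod (2 ^ (t + 1)) × ZMod (2 ^ (r + 1)) × ZMod (2 ^ r),
      ((∃ b, changOp t r htr a b = (1, 0, 0) ∧ changOp t r htr b a = (1, 0, 0)) ↔
        IsUnit a.1)) ∧
    (∀ a : ZMod (2 ^ (t + 1)) × ZMod (2 ^ (r + 1)) × ZMod (2 ^ r),
      IsUnit a.1 ↔ Odd a.1.val) ∧
    Nat.card {a : ZMod (2 ^ (t + 1)) × ZMod (2 ^ (r + 1)) × ZMod (2 ^ r) //
        ∃ b, changOp t r htr a b = (1, 0, 0) ∧ changOp t r htr b a = (1, 0, 0)}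
      = 2 ^ (t + 2 * r + 1) ∧
    2 ^ (t + 2 * r + 1) = 2 ^ (t + r + min r t + 1) := by
  haveI : NeZero ((2 : ℕ) ^ r) := ⟨pow_ne_zero _ two_ne_zero⟩
  haveI : NeZero ((2 : ℕ) ^ (r + 1)) := ⟨pow_ne_zero _ two_ne_zero⟩
  haveI : NeZero ((2 : ℕ) ^ (t + 1)) := ⟨pow_ne_zero _ two_ne_zero⟩
  have hassoc : ∀ a b c : ZMod (2 ^ (t + 1)) × ZMod (2 ^ (r + 1)) × ZMod (2 ^ r),
      changOp t r htr (changOp t r htr a b) c = changOp t r htr a (changOp t r htr b c) := by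
    intro a b c
    simp only [changOp, Prod.mk.injEq, map_mul]
    refine ⟨mul_assoc _ _ _, ?_, ?_⟩
    · simp only [chang_mu_add, chang_mu_smul t r htr, chang_mu_dbl]
      ring
    · ring
  have hid : ∀ a : ZMod (2 ^ (t + 1)) × ZMod (2 ^ (r + 1)) × ZMod (2 ^ r),
      changOp t r htr (1, 0, 0) a = a ∧ changOp t r htr a (1, 0, 0) = a := by
    intro a
    have c1 : (ZMod.cast (1 : ZMod (2 ^ (t + 1))) : ZMod (2 ^ (r + 1))) = 1 :=
      ZMod.cast_one (pow_dvd_pow 2 (by omega : r + 1 ≤ t + 1))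
    have c2 : (ZMod.cast (1 : ZMod (2 ^ (t + 1))) : ZMod (2 ^ r)) = 1 :=
      ZMod.cast_one (pow_dvd_pow 2 (by omega : r ≤ t + 1))
    constructor <;> simp [changOp, c1, c2]
  have hinv : ∀ a : ZMod (2 ^ (t + 1)) × ZMod (2 ^ (r + 1)) × ZMod (2 ^ r),
      ((∃ b, changOp t r htr a b = (1, 0, 0) ∧ changOp t r htr b a = (1, 0, 0)) ↔
        IsUnit a.1) := by
    intro a
    constructor
    · rintro ⟨b, hab, _⟩
      have h1 : a.1 * b.1 = 1 := congrArg Prod.fst hab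
      exact IsUnit.of_mul_eq_one _ h1
    · intro hx
      set u : ZMod (2 ^ (t + 1)) := ↑hx.unit⁻¹ with hu_def
      have hxu : a.1 * u = 1 := hx.mul_val_inv
      have hux : u * a.1 = 1 := hx.val_inv_mul
      -- projections
      have hpx : IsUnit (ZMod.castHom (pow_dvd_pow 2 (by omega : r ≤ t + 1))
          (ZMod (2 ^ r)) a.1) := hx.map _
      have hV : IsUnit (ZMod.castHom (pow_dvd_pow 2 (by omega : r + 1 ≤ t + 1))
          (ZMod (2 ^ (r + 1))) a.1) := hx.map _
      have hW : IsUnit (ZMod.castHom (pow_dvd_pow 2 (by omega : r ≤ t + 1))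
          (ZMod (2 ^ r)) a.1 + 2 * a.2.2) :=
        chang_unit_add_even r hr _ _ hpx
      have hVz : IsUnit (ZMod.castHom (pow_dvd_pow 2 (by omega : r + 1 ≤ t + 1))
          (ZMod (2 ^ (r + 1))) a.1 + 2 * (ZMod.cast a.2.2 : ZMod (2 ^ (r + 1)))) :=
        chang_unit_add_even (r + 1) (by omega) _ _ hV
      have hWW : (ZMod.castHom (pow_dvd_pow 2 (by omega : r ≤ t + 1))
          (ZMod (2 ^ r)) a.1 + 2 * a.2.2) * ↑hW.unit⁻¹ = 1 := hW.mul_val_inv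
      have hVV : (ZMod.castHom (pow_dvd_pow 2 (by omega : r + 1 ≤ t + 1))
          (ZMod (2 ^ (r + 1))) a.1) * ↑hV.unit⁻¹ = 1 := hV.mul_val_inv
      have hVzVz : (ZMod.castHom (pow_dvd_pow 2 (by omega : r + 1 ≤ t + 1))
          (ZMod (2 ^ (r + 1))) a.1 + 2 * (ZMod.cast a.2.2 : ZMod (2 ^ (r + 1))))
            * ↑hVz.unit⁻¹ = 1 := hVz.mul_val_inv
      set z' : ZMod (2 ^ r) :=
        -(ZMod.castHom (pow_dvd_pow 2 (by omega : r ≤ t + 1)) (ZMod (2 ^ r)) u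
            * a.2.2 * ↑hW.unit⁻¹) with hz'_def
      set y' : ZMod (2 ^ (r + 1)) :=
        -(↑hV.unit⁻¹ * (ZMod.castHom (pow_dvd_pow 2 (by omega : r + 1 ≤ t + 1))
            (ZMod (2 ^ (r + 1))) u * a.2.1
          + a.2.1 * (2 * (ZMod.cast z' : ZMod (2 ^ (r + 1)))))) with hy'_def
      set y'' : ZMod (2 ^ (r + 1)) :=
        -(↑hVz.unit⁻¹ * (ZMod.castHom (pow_dvd_pow 2 (by omega : r + 1 ≤ t + 1))
            (ZMod (2 ^ (r + 1))) u * a.2.1)) with hy''_def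
      have hab : changOp t r htr a (u, y', z') = (1, 0, 0) := by
        simp only [changOp, Prod.mk.injEq]
        refine ⟨hxu, ?_, ?_⟩
        · rw [hy'_def]
          linear_combination (-(ZMod.castHom (pow_dvd_pow 2 (by omega : r + 1 ≤ t + 1))
            (ZMod (2 ^ (r + 1))) u * a.2.1
            + a.2.1 * (2 * (ZMod.cast z' : ZMod (2 ^ (r + 1)))))) * hVV
        · rw [hz'_def]
          linear_combination (-(ZMod.castHom (pow_dvd_pow 2 (by omega : r ≤ t + 1))
            (ZMod (2 ^ r)) u * a.2.2)) * hWW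
      have hca : changOp t r htr (u, y'', z') a = (1, 0, 0) := by
        simp only [changOp, Prod.mk.injEq]
        refine ⟨hux, ?_, ?_⟩
        · rw [hy''_def]
          linear_combination (-(ZMod.castHom (pow_dvd_pow 2 (by omega : r + 1 ≤ t + 1))
            (ZMod (2 ^ (r + 1))) u * a.2.1)) * hVzVz
        · rw [hz'_def]
          linear_combination (-(ZMod.castHom (pow_dvd_pow 2 (by omega : r ≤ t + 1))
            (ZMod (2 ^ r)) u * a.2.2)) * hWW
      have hcb : (u, y'', z') = (u, y', z') := by
        calc (u, y'', z') = changOp t r htr (u, y'', z') (1, 0, 0) := ((hid _).2).symm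
          _ = changOp t r htr (u, y'', z') (changOp t r htr a (u, y', z')) := by rw [hab]
          _ = changOp t r htr (changOp t r htr (u, y'', z') a) (u, y', z') :=
              (hassoc _ _ _).symm
          _ = changOp t r htr (1, 0, 0) (u, y', z') := by rw [hca]
          _ = (u, y', z') := (hid _).1
      exact ⟨(u, y', z'), hab, hcb ▸ hca⟩
  have hodd : ∀ a : ZMod (2 ^ (t + 1)) × ZMod (2 ^ (r + 1)) × ZMod (2 ^ r),
      IsUnit a.1 ↔ Odd a.1.val := fun a => chang_isUnit_iff_odd (t + 1) (by omega) a.1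
  refine ⟨hassoc, hid, hinv, hodd, ?_, ?_⟩
  · have e1 := Nat.card_congr (Equiv.subtypeEquivRight hinv)
    rw [e1]
    have e2 : {a : ZMod (2 ^ (t + 1)) × ZMod (2 ^ (r + 1)) × ZMod (2 ^ r) // IsUnit a.1}
        ≃ {x : ZMod (2 ^ (t + 1)) // IsUnit x} × (ZMod (2 ^ (r + 1)) × ZMod (2 ^ r)) :=
      ⟨fun a => (⟨a.1.1, a.2⟩, a.1.2), fun p => ⟨(p.1.1, p.2), p.1.2⟩,
        fun a => rfl, fun p => rfl⟩
    have e3 : {x : ZMod (2 ^ (t + 1)) // IsUnit x} ≃ (ZMod (2 ^ (t + 1)))ˣ :=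
      ⟨fun x => x.2.unit, fun u => ⟨u, u.isUnit⟩,
        fun x => Subtype.ext x.2.unit_spec, fun u => Units.ext u.isUnit.unit_spec⟩
    rw [Nat.card_congr e2, Nat.card_prod, Nat.card_congr e3, Nat.card_prod,
      Nat.card_zmod, Nat.card_zmod, Nat.card_eq_fintype_card,
      ZMod.card_units_eq_totient, Nat.totient_prime_pow Nat.prime_two (by omega : 0 < t + 1)]
    rw [show (t + 1 - 1) = t from rfl, show (2 - 1 : ℕ) = 1 from rfl, mul_one, ← pow_add, ← pow_add,
      show t + (r + 1 + r) = t + 2 * r + 1 by omega]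
  · rw [min_eq_left htr]
    congr 1
    omega
end

section
/- Let E(t,r) denote the group of invertible elements of the monoid G(t,r) and let φ : E(t,r) → (ℤ/2^{t+1})ˣ × (ℤ/2^{r+1})ˣ be the group homomorphism φ(x,y,z) = (x, π(x) + μ(z)). The subset H = {(x,0,z) : x ∈ (ℤ/2^{t+1})ˣ, z ∈ ℤ/2^r} is a subgroup of E(t,r), and φ restricted to H is a group isomorphism H ≅ (ℤ/2^{t+1})ˣ × (ℤ/2^{r+1})ˣ. In particular, the short exact sequence ℤ/2^{r+1} ↪ E(t,r) ↠ (ℤ/2^{t+1})ˣ × (ℤ/2^{r+1})ˣ given by φ and its kernel splits. -/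
/-- The set `E(t,r)` of invertible elements of the monoid `G(t,r)`. -/
def changE (t r : ℕ) (htr : r ≤ t) :
    Set (ZMod (2 ^ (t + 1)) × ZMod (2 ^ (r + 1)) × ZMod (2 ^ r)) :=
  {a | ∃ b, changOp t r htr a b = (1, 0, 0) ∧ changOp t r htr b a = (1, 0, 0)}

/-- The map `φ(x,y,z) = (x, π(x) + μ(z))`. -/
def changPhi (t r : ℕ) (htr : r ≤ t)
    (a : ZMod (2 ^ (t + 1)) × ZMod (2 ^ (r + 1)) × ZMod (2 ^ r)) :
    ZMod (2 ^ (t + 1)) × ZMod (2 ^ (r + 1)) :=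
  (a.1,
   ZMod.castHom (pow_dvd_pow 2 (by omega : r + 1 ≤ t + 1)) (ZMod (2 ^ (r + 1))) a.1
     + 2 * (ZMod.cast a.2.2 : ZMod (2 ^ (r + 1))))

/-- The subset `H = {(x,0,z) : x a unit}`. -/
def changH (t r : ℕ) :
    Set (ZMod (2 ^ (t + 1)) × ZMod (2 ^ (r + 1)) × ZMod (2 ^ r)) :=
  {a | IsUnit a.1 ∧ a.2.1 = 0}


instance aux_neZero (k : ℕ) : NeZero ((2:ℕ)^k) := ⟨pow_ne_zero _ two_ne_zero⟩

lemma aux_castHom_comp {a b c : ℕ} [NeZero a] (h1 : b ∣ a) (h2 : c ∣ b) (h3 : c ∣ a)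
    (x : ZMod a) :
    ZMod.castHom h2 (ZMod c) (ZMod.castHom h1 (ZMod b) x) = ZMod.castHom h3 (ZMod c) x := by
  conv_lhs => rw [← ZMod.natCast_zmod_val x]
  conv_rhs => rw [← ZMod.natCast_zmod_val x]
  simp only [map_natCast]

lemma aux_two_mul_eq_zero (k : ℕ) (d : ZMod (2^(k+1))) :
    (2 : ZMod (2^(k+1))) * d = 0 ↔
      ZMod.castHom (pow_dvd_pow 2 k.le_succ) (ZMod (2^k)) d = 0 := by
  conv_lhs => rw [← ZMod.natCast_zmod_val d]
  conv_rhs => rw [← ZMod.natCast_zmod_val d]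
  rw [map_natCast,
    show (2 : ZMod (2^(k+1))) * (d.val : ZMod (2^(k+1))) = ((2*d.val : ℕ) : ZMod (2^(k+1))) by
      push_cast; ring,
    ZMod.natCast_eq_zero_iff, ZMod.natCast_eq_zero_iff]
  constructor
  · rintro ⟨e, he⟩
    exact ⟨e, Nat.eq_of_mul_eq_mul_left (by norm_num)
      (show 2 * d.val = 2 * (2^k * e) by rw [he]; ring)⟩
  · rintro ⟨e, he⟩
    exact ⟨e, by rw [he]; ring⟩

lemma aux_two_mul_eq (k : ℕ) (c c' : ZMod (2^(k+1))) :
    (2 : ZMod (2^(k+1))) * c = 2 * c' ↔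
      ZMod.castHom (pow_dvd_pow 2 k.le_succ) (ZMod (2^k)) c
        = ZMod.castHom (pow_dvd_pow 2 k.le_succ) (ZMod (2^k)) c' := by
  constructor
  · intro h
    have h2 := (aux_two_mul_eq_zero k (c - c')).mp (by rw [mul_sub, h, sub_self])
    rw [map_sub, sub_eq_zero] at h2; exact h2
  · intro h
    have h2 := (aux_two_mul_eq_zero k (c - c')).mpr (by rw [map_sub, h, sub_self])
    rw [mul_sub, sub_eq_zero] at h2; exact h2

lemma aux_castHom_cast (k : ℕ) (a : ZMod (2^k)) :
    ZMod.castHom (pow_dvd_pow 2 k.le_succ) (ZMod (2^k))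
      (ZMod.cast a : ZMod (2^(k+1))) = a := by
  rw [← ZMod.natCast_val a, map_natCast, ZMod.natCast_zmod_val]

lemma aux_two_cast_natCast (k : ℕ) (m : ℕ) :
    (2 : ZMod (2^(k+1))) * (ZMod.cast ((m : ZMod (2^k))) : ZMod (2^(k+1)))
      = 2 * (m : ZMod (2^(k+1))) := by
  rw [aux_two_mul_eq, aux_castHom_cast, map_natCast]

lemma aux_natCast_zmod2 (m : ℕ) : ((m : ZMod 2) = 1) ↔ m % 2 = 1 := by
  constructor
  · intro h
    have h2 := congrArg ZMod.val h
    rwa [ZMod.val_natCast, show (1 : ZMod 2).val = 1 from rfl] at h2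
  · intro h
    rw [← Nat.mod_add_div m 2, h]
    push_cast
    norm_num [show (2 : ZMod 2) = 0 from rfl]
    exact Or.inl rfl

lemma aux_isUnit_iff (k : ℕ) (hk : k ≠ 0) (a : ZMod (2^k)) :
    IsUnit a ↔ ZMod.castHom (dvd_pow_self 2 hk) (ZMod 2) a = 1 := by
  conv_lhs => rw [← ZMod.natCast_zmod_val a]
  conv_rhs => rw [← ZMod.natCast_zmod_val a]
  rw [map_natCast, ZMod.isUnit_iff_coprime, aux_natCast_zmod2,
    Nat.coprime_pow_right_iff (Nat.pos_of_ne_zero hk), Nat.coprime_comm,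
    Nat.Prime.coprime_iff_not_dvd Nat.prime_two]
  omega

lemma aux_two_cast (k : ℕ) (c : ZMod (2^(k+1))) (w : ZMod (2^k))
    (h : ZMod.castHom (pow_dvd_pow 2 k.le_succ) (ZMod (2^k)) c = w) :
    (2 : ZMod (2^(k+1))) * (ZMod.cast w : ZMod (2^(k+1))) = 2 * c :=
  (aux_two_mul_eq k _ c).mpr (by rw [aux_castHom_cast, h])

lemma aux_half (k : ℕ) (w : ZMod (2^(k+1))) (hpar : 2 ∣ w.val) :
    (2 : ZMod (2^(k+1))) * (ZMod.cast (((w.val / 2 : ℕ) : ZMod (2^k))) : ZMod (2^(k+1))) = w := by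
  rw [aux_two_cast_natCast,
    show (2 : ZMod (2^(k+1))) * ((w.val / 2 : ℕ) : ZMod (2^(k+1)))
      = ((2 * (w.val / 2) : ℕ) : ZMod (2^(k+1))) by push_cast; ring,
    Nat.mul_div_cancel' hpar, ZMod.natCast_zmod_val]

lemma chang_comp (t r : ℕ) (htr : r ≤ t) (x : ZMod (2^(t+1))) :
    ZMod.castHom (pow_dvd_pow 2 r.le_succ) (ZMod (2^r))
      (ZMod.castHom (pow_dvd_pow 2 (by omega : r+1 ≤ t+1)) (ZMod (2^(r+1))) x)
    = ZMod.castHom (pow_dvd_pow 2 (by omega : r ≤ t+1)) (ZMod (2^r)) x :=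
  aux_castHom_comp _ _ _ x

lemma chang_phi_mul (t r : ℕ) (htr : r ≤ t)
    (a b : ZMod (2 ^ (t + 1)) × ZMod (2 ^ (r + 1)) × ZMod (2 ^ r)) :
    changPhi t r htr (changOp t r htr a b)
      = ((changPhi t r htr a).1 * (changPhi t r htr b).1,
         (changPhi t r htr a).2 * (changPhi t r htr b).2) := by
  obtain ⟨x, y, z⟩ := a; obtain ⟨x', y', z'⟩ := b
  simp only [changPhi, changOp, Prod.mk.injEq, map_mul]
  refine ⟨by trivial, ?_⟩
  have key : (2 : ZMod (2^(r+1))) *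
      (ZMod.cast (ZMod.castHom (pow_dvd_pow 2 (by omega : r ≤ t+1)) (ZMod (2^r)) x * z'
        + ZMod.castHom (pow_dvd_pow 2 (by omega : r ≤ t+1)) (ZMod (2^r)) x' * z
        + 2 * z * z') : ZMod (2^(r+1)))
      = 2 * (ZMod.castHom (pow_dvd_pow 2 (by omega : r+1 ≤ t+1)) (ZMod (2^(r+1))) x
              * (ZMod.cast z' : ZMod (2^(r+1)))
            + ZMod.castHom (pow_dvd_pow 2 (by omega : r+1 ≤ t+1)) (ZMod (2^(r+1))) x'
              * (ZMod.cast z : ZMod (2^(r+1)))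
            + 2 * (ZMod.cast z : ZMod (2^(r+1))) * (ZMod.cast z' : ZMod (2^(r+1)))) := by
    refine aux_two_cast r _ _ ?_
    rw [map_add, map_add, map_mul, map_mul, map_mul, map_mul, chang_comp t r htr,
      chang_comp t r htr, aux_castHom_cast, aux_castHom_cast, map_ofNat]
  linear_combination key

def changS (t r : ℕ) (htr : r ≤ t)
    (p : ZMod (2 ^ (t + 1)) × ZMod (2 ^ (r + 1))) :
    ZMod (2 ^ (t + 1)) × ZMod (2 ^ (r + 1)) × ZMod (2 ^ r) :=
  (p.1, 0,
   (((p.2 - ZMod.castHom (pow_dvd_pow 2 (by omega : r + 1 ≤ t + 1)) (ZMod (2 ^ (r + 1))) p.1).val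
      / 2 : ℕ) : ZMod (2 ^ r)))

lemma changS_mem (t r : ℕ) (htr : r ≤ t) (u : ZMod (2^(t+1))) (v : ZMod (2^(r+1)))
    (hu : IsUnit u) : changS t r htr (u, v) ∈ changH t r := ⟨hu, rfl⟩

lemma chang_even (t r : ℕ) (htr : r ≤ t) (u : ZMod (2^(t+1))) (v : ZMod (2^(r+1)))
    (hu : IsUnit u) (hv : IsUnit v) :
    2 ∣ (v - ZMod.castHom (pow_dvd_pow 2 (by omega : r+1 ≤ t+1)) (ZMod (2^(r+1))) u).val := by
  have hrne : r + 1 ≠ 0 := Nat.succ_ne_zero r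
  have htne : t + 1 ≠ 0 := Nat.succ_ne_zero t
  set w := v - ZMod.castHom (pow_dvd_pow 2 (by omega : r+1 ≤ t+1)) (ZMod (2^(r+1))) u with hw
  have h1 := (aux_isUnit_iff (r+1) hrne v).mp hv
  have h2 : ZMod.castHom (dvd_pow_self 2 hrne) (ZMod 2)
      (ZMod.castHom (pow_dvd_pow 2 (by omega : r+1 ≤ t+1)) (ZMod (2^(r+1))) u) = 1 := by
    rw [aux_castHom_comp _ _ (dvd_pow_self 2 htne) u]
    exact (aux_isUnit_iff (t+1) htne u).mp hu
  have h0 : ZMod.castHom (dvd_pow_self 2 hrne) (ZMod 2) w = 0 := by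
    rw [hw, map_sub, h1, h2, sub_self]
  rw [← ZMod.natCast_zmod_val w, map_natCast] at h0
  exact (ZMod.natCast_eq_zero_iff _ _).mp h0

lemma changS_phi (t r : ℕ) (htr : r ≤ t) (u : ZMod (2^(t+1))) (v : ZMod (2^(r+1)))
    (hu : IsUnit u) (hv : IsUnit v) :
    changPhi t r htr (changS t r htr (u, v)) = (u, v) := by
  simp only [changS, changPhi, Prod.mk.injEq]
  refine ⟨by trivial, ?_⟩
  rw [aux_half r _ (chang_even t r htr u v hu hv)]
  ring

/-- For `t ≥ r ≥ 1`, the subset `H = {(x,0,z) : x a unit}` is a subgroup of `E(t,r)`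
and `φ` restricts to a group isomorphism `H ≅ (ℤ/2^{t+1})ˣ × (ℤ/2^{r+1})ˣ`; in
particular the short exact sequence `ℤ/2^{r+1} ↪ E(t,r) ↠ (ℤ/2^{t+1})ˣ × (ℤ/2^{r+1})ˣ`
splits. -/
theorem stmt6 (t r : ℕ) (hr : 1 ≤ r) (htr : r ≤ t) :
    -- H is contained in E(t,r)
    changH t r ⊆ changE t r htr ∧
    -- H contains the identity and is closed under the operation and inverses
    (1, 0, 0) ∈ changH t r ∧
    (∀ a ∈ changH t r, ∀ b ∈ changH t r, changOp t r htr a b ∈ changH t r) ∧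
    (∀ a ∈ changH t r, ∃ b ∈ changH t r,
      changOp t r htr a b = (1, 0, 0) ∧ changOp t r htr b a = (1, 0, 0)) ∧
    -- φ restricted to H is injective
    (∀ a ∈ changH t r, ∀ b ∈ changH t r, changPhi t r htr a = changPhi t r htr b → a = b) ∧
    -- φ restricted to H is surjective onto the product of unit groups
    (∀ u : ZMod (2 ^ (t + 1)), ∀ v : ZMod (2 ^ (r + 1)), IsUnit u → IsUnit v →
      ∃ a ∈ changH t r, changPhi t r htr a = (u, v)) ∧
    -- hence φ admits a multiplicative section with values in H: the sequence splits
    (∃ s : ZMod (2 ^ (t + 1)) × ZMod (2 ^ (r + 1)) →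
        ZMod (2 ^ (t + 1)) × ZMod (2 ^ (r + 1)) × ZMod (2 ^ r),
      (∀ u : ZMod (2 ^ (t + 1)), ∀ v : ZMod (2 ^ (r + 1)), IsUnit u → IsUnit v →
        s (u, v) ∈ changH t r ∧ changPhi t r htr (s (u, v)) = (u, v)) ∧
      (∀ u u' : ZMod (2 ^ (t + 1)), ∀ v v' : ZMod (2 ^ (r + 1)),
        IsUnit u → IsUnit v → IsUnit u' → IsUnit v' →
        s (u * u', v * v') = changOp t r htr (s (u, v)) (s (u', v')))) := by
  have hinj : ∀ a ∈ changH t r, ∀ b ∈ changH t r,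
      changPhi t r htr a = changPhi t r htr b → a = b := by
    rintro ⟨x, y, z⟩ ⟨hx, hy⟩ ⟨x', y', z'⟩ ⟨hx', hy'⟩ h
    simp only at hy hy'
    simp only [changPhi, Prod.mk.injEq] at h
    obtain ⟨h1, h2⟩ := h
    subst h1
    have h3 : (2 : ZMod (2^(r+1))) * ZMod.cast z = 2 * ZMod.cast z' := add_left_cancel h2
    have h4 := (aux_two_mul_eq r _ _).mp h3
    rw [aux_castHom_cast, aux_castHom_cast] at h4
    exact Prod.ext rfl (Prod.ext (hy.trans hy'.symm) h4)
  have hclos : ∀ a ∈ changH t r, ∀ b ∈ changH t r, changOp t r htr a b ∈ changH t r := by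
    rintro ⟨x, y, z⟩ ⟨hx, hy⟩ ⟨x', y', z'⟩ ⟨hx', hy'⟩
    simp only at hy hy'
    subst hy hy'
    exact ⟨hx.mul hx', by simp [changOp]⟩
  have hinv : ∀ a ∈ changH t r, ∃ b ∈ changH t r,
      changOp t r htr a b = (1, 0, 0) ∧ changOp t r htr b a = (1, 0, 0) := by
    rintro ⟨x, y, z⟩ ⟨hx, hy⟩
    simp only at hy
    subst hy
    obtain ⟨xu, hxu0⟩ := hx
    have hxu : (xu : ZMod (2 ^ (t + 1))) = x := hxu0
    have hrne : r ≠ 0 := by omega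
    have htne : t + 1 ≠ 0 := by omega
    have hd : IsUnit (ZMod.castHom (pow_dvd_pow 2 (by omega : r ≤ t+1)) (ZMod (2^r)) x
        + 2 * z) := by
      rw [aux_isUnit_iff r hrne, map_add, map_mul,
        aux_castHom_comp _ _ (dvd_pow_self 2 htne) x,
        (aux_isUnit_iff (t+1) htne x).mp (hxu ▸ xu.isUnit),
        map_ofNat, show ((2 : ZMod 2)) = 0 from rfl, zero_mul, add_zero]
    obtain ⟨du, hdu⟩ := hd
    have h1 : x * (↑xu⁻¹ : ZMod (2^(t+1))) = 1 := by rw [← hxu]; exact xu.mul_inv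
    have h1' : (↑xu⁻¹ : ZMod (2^(t+1))) * x = 1 := by rw [← hxu]; exact xu.inv_mul
    have hd1 : (ZMod.castHom (pow_dvd_pow 2 (by omega : r ≤ t+1)) (ZMod (2^r)) x + 2 * z)
        * (↑du⁻¹ : ZMod (2^r)) = 1 := by rw [← hdu]; exact du.mul_inv
    refine ⟨(↑xu⁻¹, 0,
      -(ZMod.castHom (pow_dvd_pow 2 (by omega : r ≤ t+1)) (ZMod (2^r)) (↑xu⁻¹) * z
        * (↑du⁻¹ : ZMod (2^r)))), ⟨xu⁻¹.isUnit, rfl⟩, ?_, ?_⟩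
    · simp only [changOp, Prod.mk.injEq]
      refine ⟨h1, by ring, ?_⟩
      linear_combination
        (-(ZMod.castHom (pow_dvd_pow 2 (by omega : r ≤ t+1)) (ZMod (2^r)) (↑xu⁻¹) * z)) * hd1
    · simp only [changOp, Prod.mk.injEq]
      refine ⟨h1', by ring, ?_⟩
      linear_combination
        (-(ZMod.castHom (pow_dvd_pow 2 (by omega : r ≤ t+1)) (ZMod (2^r)) (↑xu⁻¹) * z)) * hd1
  have hsub : changH t r ⊆ changE t r htr := by
    intro a ha
    obtain ⟨b, _, h1, h2⟩ := hinv a ha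
    exact ⟨b, h1, h2⟩
  have hsurj : ∀ u : ZMod (2 ^ (t + 1)), ∀ v : ZMod (2 ^ (r + 1)), IsUnit u → IsUnit v →
      ∃ a ∈ changH t r, changPhi t r htr a = (u, v) := fun u v hu hv =>
    ⟨changS t r htr (u, v), changS_mem t r htr u v hu, changS_phi t r htr u v hu hv⟩
  refine ⟨hsub, ⟨isUnit_one, rfl⟩, hclos, hinv, hinj, hsurj,
    changS t r htr, fun u v hu hv => ⟨changS_mem t r htr u v hu, changS_phi t r htr u v hu hv⟩,
    ?_⟩
  intro u u' v v' hu hv hu' hv'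
  refine hinj _ (changS_mem t r htr _ _ (hu.mul hu')) _
    (hclos _ (changS_mem t r htr u v hu) _ (changS_mem t r htr u' v' hu')) ?_
  rw [changS_phi t r htr _ _ (hu.mul hu') (hv.mul hv'), chang_phi_mul t r htr,
    changS_phi t r htr u v hu hv, changS_phi t r htr u' v' hu' hv']
end

section
/- In the group E(t,r) of invertible elements of G(t,r), for every element g = (x,0,z) with x a unit of ℤ/2^{t+1} and z ∈ ℤ/2^r, if g⁻¹ = (x',0,z') denotes its inverse, then the conjugate g ∘ (1,1,0) ∘ g⁻¹ equals (1, 1 + π(x)·μ(z'), 0). -/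
/-- For `t ≥ r ≥ 1`: in the group `E(t,r)` of invertible elements of `G(t,r)`, if
`g = (x,0,z)` with `x` a unit and `g⁻¹ = (x',0,z')`, then
`g ∘ (1,1,0) ∘ g⁻¹ = (1, 1 + π(x)·μ(z'), 0)`. -/
theorem stmt7 (t r : ℕ) (hr : 1 ≤ r) (htr : r ≤ t)
    (x x' : ZMod (2 ^ (t + 1))) (z z' : ZMod (2 ^ r))
    (hx : IsUnit x)
    (hinv₁ : changOp t r htr (x, 0, z) (x', 0, z') = (1, 0, 0))
    (hinv₂ : changOp t r htr (x', 0, z') (x, 0, z) = (1, 0, 0)) :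
    changOp t r htr (changOp t r htr (x, 0, z) (1, 1, 0)) (x', 0, z')
      = (1,
         1 + ZMod.castHom (pow_dvd_pow 2 (by omega : r + 1 ≤ t + 1)) (ZMod (2 ^ (r + 1))) x
           * (2 * (ZMod.cast z' : ZMod (2 ^ (r + 1)))),
         0) := by
  have d1 : 2 ^ (r + 1) ∣ 2 ^ (t + 1) := pow_dvd_pow 2 (by omega)
  have d2 : 2 ^ r ∣ 2 ^ (t + 1) := pow_dvd_pow 2 (by omega)
  simp only [changOp, Prod.mk.injEq, mul_one, one_mul, mul_zero, zero_mul, add_zero,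
    zero_add, map_one, map_mul, ZMod.castHom_apply, ZMod.cast_one d1, ZMod.cast_one d2]
    at hinv₁ ⊢
  obtain ⟨h1, -, h3⟩ := hinv₁
  refine ⟨h1, ?_, h3⟩
  have hc : (ZMod.cast (x * x') : ZMod (2 ^ (r + 1))) = 1 := by
    rw [h1]; exact ZMod.cast_one d1
  rw [ZMod.cast_mul d1] at hc
  linear_combination hc
end
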